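/- For every ε, δ ∈ (0,1), every positive integer m with m ≥ 2/(ε²δ), every positive integer n, and every unit vector x ∈ ℝⁿ (‖x‖₂ = 1), feature hashing satisfies Pr[ | ‖Ax‖₂² − 1 | ≥ ε ] ≤ δ. -/
import Mathlib


open scoped BigOperators Classical
noncomputable section

namespace FH

def hashSq (n m : ℕ) (h : Fin n → Fin m) (σ : Fin n → Bool) (x : Fin n → ℝ) : ℝ :=
  ∑ i : Fin m, (∑ j : Fin n, (if h j = i then (if σ j then (1:ℝ) else -1) * x j else 0)) ^ 2

def hashPr (n m : ℕ) (P : (Fin n → Fin m) → (Fin n → Bool) → Prop) : ℝ :=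
  ((Finset.univ.filter (fun p : (Fin n → Fin m) × (Fin n → Bool) => P p.1 p.2)).card : ℝ) /
    (Fintype.card ((Fin n → Fin m) × (Fin n → Bool)) : ℝ)

def l2 (n : ℕ) (x : Fin n → ℝ) : ℝ := Real.sqrt (∑ j, x j ^ 2)

def linf (n : ℕ) (x : Fin n → ℝ) : ℝ := ⨆ j, |x j|

def goodPr (n m : ℕ) (ε : ℝ) (x : Fin n → ℝ) : ℝ :=
  hashPr n m (fun h σ => |hashSq n m h σ x - l2 n x ^ 2| < ε * l2 n x ^ 2)

def nuSet (m : ℕ) (ε δ : ℝ) : Set ℝ :=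
  {ν | ν ∈ Set.Icc (0:ℝ) 1 ∧ ∀ n : ℕ, 0 < n → ∀ x : Fin n → ℝ, x ≠ 0 →
    linf n x ≤ ν * l2 n x → 1 - δ ≤ goodPr n m ε x}

def nu (m : ℕ) (ε δ : ℝ) : ℝ := sSup (nuSet m ε δ)

def lg (x : ℝ) : ℝ := Real.logb 2 x

def sg {n : ℕ} (σ : Fin n → Bool) (j : Fin n) : ℝ := if σ j then 1 else -1

lemma sg_mul_self {n : ℕ} (σ : Fin n → Bool) (j : Fin n) : sg σ j * sg σ j = 1 := by
  unfold sg; by_cases h : σ j <;> simp [h]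

def negAt {n : ℕ} (a : Fin n) (σ : Fin n → Bool) : Fin n → Bool :=
  fun i => if i = a then !σ i else σ i

lemma negAt_invol {n : ℕ} (a : Fin n) : Function.Involutive (negAt a) := by
  intro σ; funext i; unfold negAt; by_cases h : i = a <;> simp [h]

lemma sg_negAt {n : ℕ} (a : Fin n) (σ : Fin n → Bool) (i : Fin n) :
    sg (negAt a σ) i = if i = a then -(sg σ i) else sg σ i := by
  unfold sg negAt
  by_cases h : i = a
  · subst h; by_cases h2 : σ i <;> simp [h2]
  · simp [h]

lemma sum_sg_vanish {n : ℕ} (a b c d : Fin n) (hb : b ≠ a) (hc : c ≠ a) (hd : d ≠ a) :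
    ∑ σ : Fin n → Bool, sg σ a * sg σ b * sg σ c * sg σ d = 0 := by
  have key : ∀ σ : Fin n → Bool,
      sg (negAt a σ) a * sg (negAt a σ) b * sg (negAt a σ) c * sg (negAt a σ) d
        = -(sg σ a * sg σ b * sg σ c * sg σ d) := by
    intro σ
    rw [sg_negAt, sg_negAt, sg_negAt, sg_negAt]
    simp only [if_pos rfl, if_neg hb, if_neg hc, if_neg hd, if_true]
    ring
  have hbij : Function.Bijective (negAt (n := n) a) := (negAt_invol a).bijective
  have h1 : ∑ σ : Fin n → Bool, sg σ a * sg σ b * sg σ c * sg σ d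
      = ∑ σ : Fin n → Bool, sg (negAt a σ) a * sg (negAt a σ) b * sg (negAt a σ) c * sg (negAt a σ) d :=
    (Fintype.sum_bijective _ hbij _ _ (fun σ => rfl)).symm
  have h2 : ∑ σ : Fin n → Bool, sg σ a * sg σ b * sg σ c * sg σ d
      = -∑ σ : Fin n → Bool, sg σ a * sg σ b * sg σ c * sg σ d := by
    nth_rewrite 1 [h1]
    rw [← Finset.sum_neg_distrib]
    exact Finset.sum_congr rfl fun σ _ => key σ
  linarith

lemma hcount {n m : ℕ} (j k : Fin n) (hjk : j ≠ k) :
    ∑ h : Fin n → Fin m, (if h j = h k then (1:ℝ) else 0) = (m:ℝ) ^ (n - 1) := by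
  have he : ∀ (v : Fin m) (g : {a // a ≠ k} → Fin m) (a : Fin n),
      (Equiv.funSplitAt k (Fin m)).symm (v, g) a = if h : a = k then v else g ⟨a, h⟩ := by
    intro v g a
    simp [Equiv.funSplitAt, Equiv.piSplitAt]
  set e := Equiv.funSplitAt k (Fin m) with he_def
  rw [← e.symm.sum_comp (fun h => if h j = h k then (1:ℝ) else 0)]
  rw [Fintype.sum_prod_type_right]
  have heval : ∀ (v : Fin m) (g : {a // a ≠ k} → Fin m),
      (if (e.symm (v, g)) j = (e.symm (v, g)) k then (1:ℝ) else 0)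
        = (if g ⟨j, hjk⟩ = v then (1:ℝ) else 0) := by
    intro v g
    have h1 : (e.symm (v, g)) k = v := by rw [he]; simp
    have h2 : (e.symm (v, g)) j = g ⟨j, hjk⟩ := by rw [he]; simp [hjk]
    rw [h1, h2]
  have : ∀ g : {a // a ≠ k} → Fin m,
      ∑ v : Fin m, (if (e.symm (v, g)) j = (e.symm (v, g)) k then (1:ℝ) else 0) = 1 := by
    intro g
    simp only [heval]
    rw [Finset.sum_ite_eq Finset.univ (g ⟨j, hjk⟩) (fun _ => (1:ℝ))]
    simp
  rw [Finset.sum_congr rfl (fun g _ => this g)]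
  rw [Finset.sum_const, Finset.card_univ, Fintype.card_fun, Fintype.card_fin, nsmul_eq_mul,
    mul_one]
  have hcard : Fintype.card {a : Fin n // a ≠ k} = n - 1 := by
    rw [Fintype.card_subtype_compl]
    simp
  rw [hcard]
  push_cast
  ring



lemma hashSq_expand {n m : ℕ} (h : Fin n → Fin m) (σ : Fin n → Bool) (x : Fin n → ℝ) :
    hashSq n m h σ x
      = ∑ j : Fin n, ∑ k : Fin n, (if h j = h k then sg σ j * sg σ k * (x j * x k) else 0) := by
  show (∑ i : Fin m, (∑ j : Fin n, (if h j = i then (if σ j then (1:ℝ) else -1) * x j else 0)) ^ 2) = _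
  have step1 : ∀ i : Fin m,
      (∑ j : Fin n, (if h j = i then (if σ j then (1:ℝ) else -1) * x j else 0)) ^ 2
        = ∑ j : Fin n, ∑ k : Fin n,
            (if h j = i then (if h j = h k then sg σ j * sg σ k * (x j * x k) else 0) else 0) := by
    intro i
    rw [sq, Finset.sum_mul_sum]
    refine Finset.sum_congr rfl fun j _ => Finset.sum_congr rfl fun k _ => ?_
    by_cases h1 : h j = i <;> by_cases h2 : h k = i
    · have h3 : h j = h k := h1.trans h2.symm
      simp only [if_pos h1, if_pos h2, if_pos h3]
      unfold sg; ring
    · have h3 : ¬ (h j = h k) := fun hh => h2 (hh ▸ h1)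
      rw [if_neg h2, mul_zero, if_pos h1, if_neg h3]
    · simp [h1]
    · simp [h1]
  rw [Finset.sum_congr rfl fun i _ => step1 i]
  rw [Finset.sum_comm]
  refine Finset.sum_congr rfl fun j _ => ?_
  rw [Finset.sum_comm]
  refine Finset.sum_congr rfl fun k _ => ?_
  rw [Finset.sum_ite_eq Finset.univ (h j)
    (fun _ => if h j = h k then sg σ j * sg σ k * (x j * x k) else 0)]
  simp

lemma hashSq_sub_one {n m : ℕ} (h : Fin n → Fin m) (σ : Fin n → Bool) (x : Fin n → ℝ)
    (hx : ∑ j, x j ^ 2 = 1) :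
    hashSq n m h σ x - 1
      = ∑ p ∈ (Finset.univ : Finset (Fin n)).offDiag,
          (if h p.1 = h p.2 then sg σ p.1 * sg σ p.2 * (x p.1 * x p.2) else 0) := by
  rw [hashSq_expand]
  have hsplit : (∑ j : Fin n, ∑ k : Fin n,
        (if h j = h k then sg σ j * sg σ k * (x j * x k) else 0))
      = ∑ p ∈ (Finset.univ : Finset (Fin n)) ×ˢ Finset.univ,
          (if h p.1 = h p.2 then sg σ p.1 * sg σ p.2 * (x p.1 * x p.2) else 0) := by
    rw [Finset.sum_product]
  rw [hsplit, ← Finset.diag_union_offDiag (Finset.univ : Finset (Fin n)),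
    Finset.sum_union (Finset.disjoint_diag_offDiag _), Finset.sum_diag]
  have hdiag : (∑ a : Fin n,
      (if h a = h a then sg σ a * sg σ a * (x a * x a) else 0)) = 1 := by
    rw [← hx]
    refine Finset.sum_congr rfl fun a _ => ?_
    rw [if_pos rfl, sg_mul_self]
    ring
  rw [hdiag]
  ring

lemma sum_sg_vanish' {n : ℕ} (a b c d : Fin n) (ha : a ≠ b) (hc : c ≠ b) (hd : d ≠ b) :
    ∑ σ : Fin n → Bool, sg σ a * sg σ b * sg σ c * sg σ d = 0 := by
  have := sum_sg_vanish b a c d ha hc hd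
  rw [← this]
  exact Finset.sum_congr rfl fun σ _ => by ring

lemma sum_sg_one {n : ℕ} (f : (Fin n → Bool) → ℝ) (hf : ∀ σ, f σ = 1) :
    ∑ σ : Fin n → Bool, f σ = (2:ℝ)^n := by
  rw [Finset.sum_congr rfl fun σ _ => hf σ]
  simp [Finset.card_univ]

lemma W_eval {n m : ℕ} (x : Fin n → ℝ) (p q : Fin n × Fin n)
    (hp : p.1 ≠ p.2) (hq : q.1 ≠ q.2) :
    (∑ h : Fin n → Fin m, ∑ σ : Fin n → Bool,
        (if h p.1 = h p.2 then sg σ p.1 * sg σ p.2 * (x p.1 * x p.2) else 0)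
        * (if h q.1 = h q.2 then sg σ q.1 * sg σ q.2 * (x q.1 * x q.2) else 0))
      = (if q = p then (2:ℝ)^n * (m:ℝ)^(n-1) * ((x p.1)^2 * (x p.2)^2) else 0)
        + (if q = p.swap then (2:ℝ)^n * (m:ℝ)^(n-1) * ((x p.1)^2 * (x p.2)^2) else 0) := by
  obtain ⟨j, k⟩ := p
  obtain ⟨j', k'⟩ := q
  simp only at hp hq ⊢
  have hfact : ∀ (h : Fin n → Fin m) (σ : Fin n → Bool),
      (if h j = h k then sg σ j * sg σ k * (x j * x k) else 0)
        * (if h j' = h k' then sg σ j' * sg σ k' * (x j' * x k') else 0)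
      = (if h j = h k ∧ h j' = h k' then (1:ℝ) else 0)
          * (sg σ j * sg σ k * sg σ j' * sg σ k') * (x j * x k * (x j' * x k')) := by
    intro h σ
    by_cases h1 : h j = h k <;> by_cases h2 : h j' = h k' <;>
      simp [h1, h2] <;> ring
  have hinner : ∀ h : Fin n → Fin m,
      (∑ σ : Fin n → Bool,
        (if h j = h k then sg σ j * sg σ k * (x j * x k) else 0)
        * (if h j' = h k' then sg σ j' * sg σ k' * (x j' * x k') else 0))
      = (if h j = h k ∧ h j' = h k' then (1:ℝ) else 0)
          * (∑ σ : Fin n → Bool, sg σ j * sg σ k * sg σ j' * sg σ k')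
          * (x j * x k * (x j' * x k')) := by
    intro h
    rw [Finset.sum_congr rfl fun σ _ => hfact h σ]
    rw [← Finset.sum_mul]
    rw [← Finset.mul_sum]
  rw [Finset.sum_congr rfl fun h _ => hinner h]
  by_cases case1 : j' = j ∧ k' = k
  · obtain ⟨e1, e2⟩ := case1
    rw [e1, e2]
    have hS4 : (∑ σ : Fin n → Bool, sg σ j * sg σ k * sg σ j * sg σ k) = (2:ℝ)^n := by
      refine sum_sg_one _ fun σ => ?_
      nlinarith [sg_mul_self σ j, sg_mul_self σ k]
    rw [hS4]
    have swne : ¬ ((j, k) = Prod.swap (j, k)) := by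
      simp only [Prod.swap_prod_mk, Prod.ext_iff]
      exact fun hh => hp hh.1
    simp only [if_pos rfl, if_neg swne, add_zero, and_self]
    rw [← Finset.sum_mul, ← Finset.sum_mul]
    rw [hcount j k hp]
    simp only [if_true]
    ring
  · by_cases case2 : j' = k ∧ k' = j
    · obtain ⟨e1, e2⟩ := case2
      rw [e1, e2]
      have hS4 : (∑ σ : Fin n → Bool, sg σ j * sg σ k * sg σ k * sg σ j) = (2:ℝ)^n := by
        refine sum_sg_one _ fun σ => ?_
        nlinarith [sg_mul_self σ j, sg_mul_self σ k]
      rw [hS4]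
      have hne : ¬ ((k, j) = (j, k)) := by
        simp only [Prod.ext_iff]
        exact fun hh => hp hh.1.symm
      simp only [if_neg hne, Prod.swap_prod_mk, if_pos rfl, zero_add]
      have hcond : ∀ h : Fin n → Fin m,
          (if h j = h k ∧ h k = h j then (1:ℝ) else 0) = (if h j = h k then (1:ℝ) else 0) := by
        intro h
        by_cases hh : h j = h k
        · rw [if_pos ⟨hh, hh.symm⟩, if_pos hh]
        · rw [if_neg (fun hc => hh hc.1), if_neg hh]
      rw [Finset.sum_congr rfl fun h _ => by rw [hcond h]]
      rw [← Finset.sum_mul, ← Finset.sum_mul]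
      rw [hcount j k hp]
      simp only [if_true]
      ring
    · -- bad case: S4 = 0
      have hS4 : (∑ σ : Fin n → Bool, sg σ j * sg σ k * sg σ j' * sg σ k') = 0 := by
        by_cases e1 : j = j'
        · have hkk' : k' ≠ k := fun hh => case1 ⟨e1.symm, hh⟩
          have hc : j' ≠ k := by rw [← e1]; exact hp
          exact sum_sg_vanish' j k j' k' hp hc hkk'
        · by_cases e2 : j = k'
          · have hj'k : j' ≠ k := fun hh => case2 ⟨hh, e2.symm⟩
            have hd : k' ≠ k := fun hh => hp (e2.trans hh)
            exact sum_sg_vanish' j k j' k' hp hj'k hd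
          · exact sum_sg_vanish j k j' k' (Ne.symm hp) (fun hh => e1 hh.symm)
              (fun hh => e2 hh.symm)
      rw [hS4]
      have hne1 : ¬ ((j', k') = (j, k)) := by
        simp only [Prod.ext_iff]; exact fun hh => case1 ⟨hh.1, hh.2⟩
      have hne2 : ¬ ((j', k') = Prod.swap (j, k)) := by
        simp only [Prod.swap_prod_mk, Prod.ext_iff]
        exact fun hh => case2 ⟨hh.1, hh.2⟩
      rw [if_neg hne1, if_neg hne2]
      simp

lemma master {n m : ℕ} (x : Fin n → ℝ) (hx : ∑ j, x j ^ 2 = 1) :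
    ∑ h : Fin n → Fin m, ∑ σ : Fin n → Bool, (hashSq n m h σ x - 1)^2
      ≤ 2 * (2:ℝ)^n * (m:ℝ)^(n-1) := by
  classical
  set T := (Finset.univ : Finset (Fin n)).offDiag with hT
  set t : (Fin n → Fin m) → (Fin n → Bool) → Fin n × Fin n → ℝ :=
    fun h σ p => if h p.1 = h p.2 then sg σ p.1 * sg σ p.2 * (x p.1 * x p.2) else 0 with ht
  have step1 : ∀ (h : Fin n → Fin m) (σ : Fin n → Bool),
      (hashSq n m h σ x - 1)^2 = ∑ p ∈ T, ∑ q ∈ T, t h σ p * t h σ q := by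
    intro h σ
    rw [hashSq_sub_one h σ x hx, sq, Finset.sum_mul_sum]
  have step2 : (∑ h : Fin n → Fin m, ∑ σ : Fin n → Bool, (hashSq n m h σ x - 1)^2)
      = ∑ p ∈ T, ∑ q ∈ T, ∑ h : Fin n → Fin m, ∑ σ : Fin n → Bool, t h σ p * t h σ q := by
    rw [Finset.sum_congr rfl fun h _ => Finset.sum_congr rfl fun σ _ => step1 h σ]
    rw [Finset.sum_congr rfl fun h _ => Finset.sum_comm]
    rw [Finset.sum_comm]
    refine Finset.sum_congr rfl fun p _ => ?_
    rw [Finset.sum_congr rfl fun h _ => Finset.sum_comm]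
    exact Finset.sum_comm
  rw [step2]
  have step3 : ∀ p ∈ T, (∑ q ∈ T, ∑ h : Fin n → Fin m, ∑ σ : Fin n → Bool, t h σ p * t h σ q)
      = 2 * ((2:ℝ)^n * (m:ℝ)^(n-1) * ((x p.1)^2 * (x p.2)^2)) := by
    intro p hpT
    have hp : p.1 ≠ p.2 := (Finset.mem_offDiag.mp hpT).2.2
    have hWq : ∀ q ∈ T, (∑ h : Fin n → Fin m, ∑ σ : Fin n → Bool, t h σ p * t h σ q)
        = (if q = p then (2:ℝ)^n * (m:ℝ)^(n-1) * ((x p.1)^2 * (x p.2)^2) else 0)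
          + (if q = p.swap then (2:ℝ)^n * (m:ℝ)^(n-1) * ((x p.1)^2 * (x p.2)^2) else 0) := by
      intro q hqT
      have hq : q.1 ≠ q.2 := (Finset.mem_offDiag.mp hqT).2.2
      exact W_eval x p q hp hq
    rw [Finset.sum_congr rfl hWq, Finset.sum_add_distrib]
    have h1 : (∑ q ∈ T, if q = p then (2:ℝ)^n * (m:ℝ)^(n-1) * ((x p.1)^2 * (x p.2)^2) else 0)
        = (2:ℝ)^n * (m:ℝ)^(n-1) * ((x p.1)^2 * (x p.2)^2) := by
      rw [Finset.sum_ite_eq' T p (fun _ => (2:ℝ)^n * (m:ℝ)^(n-1) * ((x p.1)^2 * (x p.2)^2))]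
      rw [if_pos hpT]
    have hswT : p.swap ∈ T := by
      rw [Finset.mem_offDiag]
      exact ⟨Finset.mem_univ _, Finset.mem_univ _, Ne.symm hp⟩
    have h2 : (∑ q ∈ T, if q = p.swap then (2:ℝ)^n * (m:ℝ)^(n-1) * ((x p.1)^2 * (x p.2)^2) else 0)
        = (2:ℝ)^n * (m:ℝ)^(n-1) * ((x p.1)^2 * (x p.2)^2) := by
      rw [Finset.sum_ite_eq' T p.swap (fun _ => (2:ℝ)^n * (m:ℝ)^(n-1) * ((x p.1)^2 * (x p.2)^2))]
      rw [if_pos hswT]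
    rw [h1, h2]
    ring
  rw [Finset.sum_congr rfl step3]
  rw [← Finset.mul_sum]
  have hbound : (∑ p ∈ T, (2:ℝ)^n * (m:ℝ)^(n-1) * ((x p.1)^2 * (x p.2)^2))
      ≤ (2:ℝ)^n * (m:ℝ)^(n-1) := by
    rw [← Finset.mul_sum]
    have hsub : (∑ p ∈ T, ((x p.1)^2 * (x p.2)^2))
        ≤ ∑ p ∈ (Finset.univ : Finset (Fin n)) ×ˢ Finset.univ, ((x p.1)^2 * (x p.2)^2) := by
      refine Finset.sum_le_sum_of_subset_of_nonneg ?_ ?_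
      · rw [hT, ← Finset.diag_union_offDiag (Finset.univ : Finset (Fin n))]
        exact Finset.subset_union_right
      · intro p _ _
        positivity
    have hfull : (∑ p ∈ (Finset.univ : Finset (Fin n)) ×ˢ Finset.univ,
        ((x p.1)^2 * (x p.2)^2)) = 1 := by
      rw [Finset.sum_product]
      have heq : (∑ a : Fin n, ∑ b : Fin n, x (a, b).1 ^ 2 * x (a, b).2 ^ 2)
          = (∑ a : Fin n, x a ^ 2) * (∑ b : Fin n, x b ^ 2) :=
        (Finset.sum_mul_sum Finset.univ Finset.univ (fun a => x a ^ 2) (fun b => x b ^ 2)).symm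
      rw [heq, hx]
      norm_num
    have h2n : (0:ℝ) ≤ (2:ℝ)^n * (m:ℝ)^(n-1) := by positivity
    calc (2:ℝ)^n * (m:ℝ)^(n-1) * (∑ p ∈ T, ((x p.1)^2 * (x p.2)^2))
        ≤ (2:ℝ)^n * (m:ℝ)^(n-1) * 1 := by
          refine mul_le_mul_of_nonneg_left ?_ h2n
          rw [← hfull]; exact hsub
      _ = (2:ℝ)^n * (m:ℝ)^(n-1) := by ring
  calc 2 * ∑ p ∈ T, (2:ℝ)^n * (m:ℝ)^(n-1) * ((x p.1)^2 * (x p.2)^2)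
      ≤ 2 * ((2:ℝ)^n * (m:ℝ)^(n-1)) := by linarith
    _ = 2 * (2:ℝ)^n * (m:ℝ)^(n-1) := by ring




theorem prob_bound_of_large_m :
    ∀ ε δ : ℝ, ε ∈ Set.Ioo (0:ℝ) 1 → δ ∈ Set.Ioo (0:ℝ) 1 → ∀ m : ℕ, 0 < m →
      2 / (ε^2 * δ) ≤ (m:ℝ) →
      ∀ n : ℕ, 0 < n → ∀ x : Fin n → ℝ, l2 n x = 1 →
        hashPr n m (fun h σ => ε ≤ |hashSq n m h σ x - 1|) ≤ δ := by

  intro ε δ hε hδ m hm hbig n hn x hx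
  have hx' : Real.sqrt (∑ j, x j ^ 2) = 1 := hx
  unfold hashPr
  obtain ⟨hε0, hε1⟩ := hε
  obtain ⟨hδ0, hδ1⟩ := hδ
  have hm0 : (0:ℝ) < (m:ℝ) := by exact_mod_cast hm
  have hsum : ∑ j, x j ^ 2 = 1 := by
    have h0 : (0:ℝ) ≤ ∑ j, x j ^ 2 := by positivity
    have h1 := Real.sq_sqrt h0
    rw [hx'] at h1
    simpa using h1.symm
  set B := (Finset.univ.filter (fun p : (Fin n → Fin m) × (Fin n → Bool) =>
      ε ≤ |hashSq n m p.1 p.2 x - 1|)) with hB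
  have hN : (Fintype.card ((Fin n → Fin m) × (Fin n → Bool)) : ℝ) = (m:ℝ)^n * 2^n := by
    rw [Fintype.card_prod, Fintype.card_fun, Fintype.card_fun]
    simp
  rw [hN]
  have hNpos : (0:ℝ) < (m:ℝ)^n * 2^n := by positivity
  rw [div_le_iff₀ hNpos]
  -- Markov
  have hsq : ∀ pr ∈ B, ε^2 ≤ (hashSq n m pr.1 pr.2 x - 1)^2 := by
    intro pr hpr
    have hb : ε ≤ |hashSq n m pr.1 pr.2 x - 1| := (Finset.mem_filter.mp hpr).2
    calc ε^2 ≤ |hashSq n m pr.1 pr.2 x - 1|^2 := by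
          exact pow_le_pow_left₀ hε0.le hb 2
      _ = (hashSq n m pr.1 pr.2 x - 1)^2 := sq_abs _
  have h1 : ε^2 * (B.card : ℝ) ≤ ∑ pr ∈ B, (hashSq n m pr.1 pr.2 x - 1)^2 := by
    have := Finset.card_nsmul_le_sum B (fun pr => (hashSq n m pr.1 pr.2 x - 1)^2) (ε^2) hsq
    rw [nsmul_eq_mul] at this
    linarith
  have h2 : (∑ pr ∈ B, (hashSq n m pr.1 pr.2 x - 1)^2)
      ≤ ∑ pr : (Fin n → Fin m) × (Fin n → Bool), (hashSq n m pr.1 pr.2 x - 1)^2 := by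
    refine Finset.sum_le_sum_of_subset_of_nonneg (Finset.filter_subset _ _) ?_
    intro pr _ _
    positivity
  have h3 : (∑ pr : (Fin n → Fin m) × (Fin n → Bool), (hashSq n m pr.1 pr.2 x - 1)^2)
      = ∑ h : Fin n → Fin m, ∑ σ : Fin n → Bool, (hashSq n m h σ x - 1)^2 :=
    Fintype.sum_prod_type (f := fun pr : (Fin n → Fin m) × (Fin n → Bool) =>
      (hashSq n m pr.1 pr.2 x - 1)^2)
  have h4 := master (m := m) x hsum
  have hmarkov : ε^2 * (B.card : ℝ) ≤ 2 * (2:ℝ)^n * (m:ℝ)^(n-1) := by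
    rw [h3] at h2
    linarith
  -- arithmetic
  have hpow : (m:ℝ)^n = (m:ℝ)^(n-1) * (m:ℝ) := by
    rw [← pow_succ]
    congr 1
    omega
  have hbig2 : 2 ≤ ε^2 * δ * (m:ℝ) := by
    have hpos : (0:ℝ) < ε^2 * δ := by positivity
    rw [div_le_iff₀ hpos] at hbig
    linarith
  have hkey : 2 * (2:ℝ)^n * (m:ℝ)^(n-1) ≤ ε^2 * (δ * ((m:ℝ)^n * 2^n)) := by
    rw [hpow]
    have hnn : (0:ℝ) ≤ (2:ℝ)^n * (m:ℝ)^(n-1) := by positivity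
    nlinarith [mul_le_mul_of_nonneg_right hbig2 hnn]
  have hε2 : (0:ℝ) < ε^2 := by positivity
  nlinarith [hmarkov, hkey]


end FH
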